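/- Assume in addition W ≠ V (so that W^⊥ ≠ 0). Then the following are equivalent: (a) 1 is an eigenvalue of A and every eigenvalue of A is ≤ 1; (b) B restricted to U ∩ W is degenerate, i.e. there is a nonzero x ∈ U ∩ W with B x y = 0 for all y ∈ U ∩ W. -/
import Mathlib


noncomputable section

/-- The Minkowski bilinear form of index 1 on `ℝ^{n+2}`:
`B x y = ∑_{i=0}^{n} x i * y i − x (n+1) * y (n+1)`. -/
def mB (n : ℕ) : (Fin (n+2) → ℝ) →ₗ[ℝ] (Fin (n+2) → ℝ) →ₗ[ℝ] ℝ :=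
  LinearMap.mk₂ ℝ
    (fun x y => ∑ i : Fin (n+2), (if (i : ℕ) = n+1 then (-1:ℝ) else 1) * x i * y i)
    (fun x x' y => by
      rw [← Finset.sum_add_distrib]
      exact Finset.sum_congr rfl fun i _ => by simp only [Pi.add_apply]; ring)
    (fun c x y => by
      rw [smul_eq_mul, Finset.mul_sum]
      exact Finset.sum_congr rfl fun i _ => by simp only [Pi.smul_apply, smul_eq_mul]; ring)
    (fun x y y' => by
      rw [← Finset.sum_add_distrib]
      exact Finset.sum_congr rfl fun i _ => by simp only [Pi.add_apply]; ring)
    (fun c x y => by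
      rw [smul_eq_mul, Finset.mul_sum]
      exact Finset.sum_congr rfl fun i _ => by simp only [Pi.smul_apply, smul_eq_mul]; ring)

/-- The orthogonal complement `S^⊥ = {x | ∀ s ∈ S, B x s = 0}` w.r.t. the Minkowski form. -/
def mperp (n : ℕ) (S : Submodule ℝ (Fin (n+2) → ℝ)) : Submodule ℝ (Fin (n+2) → ℝ) where
  carrier := {x | ∀ s ∈ S, mB n x s = 0}
  zero_mem' := fun s _ => by simp
  add_mem' := fun ha hb s hs => by simp [ha s hs, hb s hs]
  smul_mem' := fun c a ha s hs => by simp [ha s hs]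

/-- A subspace is pseudo-euclidean if the Minkowski form restricted to it
is nondegenerate and it contains a timelike vector. -/
def IsPseudoEuclidean (n : ℕ) (S : Submodule ℝ (Fin (n+2) → ℝ)) : Prop :=
  (∀ x ∈ S, (∀ y ∈ S, mB n x y = 0) → x = 0) ∧ ∃ x ∈ S, mB n x x < 0

lemma mem_mperp {n : ℕ} {S : Submodule ℝ (Fin (n+2) → ℝ)} {x : Fin (n+2) → ℝ} :
    x ∈ mperp n S ↔ ∀ s ∈ S, mB n x s = 0 := Iff.rfl

lemma mB_apply (n : ℕ) (x y : Fin (n+2) → ℝ) :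
    mB n x y = ∑ i : Fin (n+2), (if (i : ℕ) = n+1 then (-1:ℝ) else 1) * x i * y i := rfl

lemma mB_comm (n : ℕ) (x y : Fin (n+2) → ℝ) : mB n x y = mB n y x := by
  simp only [mB_apply]; exact Finset.sum_congr rfl fun i _ => by ring

lemma mB_eq (n : ℕ) (x y : Fin (n+2) → ℝ) :
    mB n x y = (∑ i ∈ Finset.univ.erase (Fin.last (n+1)), x i * y i)
      - x (Fin.last (n+1)) * y (Fin.last (n+1)) := by
  rw [mB_apply, ← Finset.add_sum_erase _ _ (Finset.mem_univ (Fin.last (n+1)))]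
  have h1 : ((Fin.last (n+1) : Fin (n+2)) : ℕ) = n+1 := rfl
  rw [if_pos h1]
  have h2 : ∀ i ∈ Finset.univ.erase (Fin.last (n+1)),
      (if (i : ℕ) = n+1 then (-1:ℝ) else 1) * x i * y i = x i * y i := by
    intro i hi
    have hne : (i : ℕ) ≠ n+1 := fun h => (Finset.mem_erase.mp hi).1 (Fin.ext h)
    rw [if_neg hne]; ring
  rw [Finset.sum_congr rfl h2]; ring

lemma mB_single (n : ℕ) (x : Fin (n+2) → ℝ) (j : Fin (n+2)) :
    mB n x (Pi.single j 1) = (if (j : ℕ) = n+1 then (-1:ℝ) else 1) * x j := by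
  rw [mB_apply, Finset.sum_eq_single j]
  · simp
  · intro i _ hij; simp [Pi.single_eq_of_ne hij]
  · simp

lemma mB_zero (n : ℕ) (x : Fin (n+2) → ℝ) (h : ∀ y, mB n x y = 0) : x = 0 := by
  funext i
  have hi := h (Pi.single i 1)
  rw [mB_single] at hi
  have hc : (if (i : ℕ) = n+1 then (-1:ℝ) else 1) ≠ 0 := by split <;> norm_num
  have := mul_eq_zero.mp hi
  simpa [hc] using this

lemma timelike_perp (n : ℕ) (t x : Fin (n+2) → ℝ)
    (ht : mB n t t < 0) (ho : mB n x t = 0) (hx : mB n x x ≤ 0) : x = 0 := by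
  set m := Fin.last (n+1) with hm
  set s := Finset.univ.erase m with hs
  rw [mB_eq] at ht ho hx
  have hbnn : (0:ℝ) ≤ ∑ i ∈ s, t i * t i :=
    Finset.sum_nonneg fun i _ => mul_self_nonneg _
  have htlt : ∑ i ∈ s, t i * t i < t m * t m := by linarith
  have hxle : ∑ i ∈ s, x i * x i ≤ x m * x m := by linarith
  have hoe : ∑ i ∈ s, x i * t i = x m * t m := by linarith
  have hxm : x m = 0 := by
    by_contra hxm
    have hxm2 : 0 < x m * x m := mul_self_pos.mpr hxm
    have hcs := Finset.sum_mul_sq_le_sq_mul_sq s x t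
    simp only [pow_two] at hcs
    have h1 : (∑ i ∈ s, x i * x i) * (∑ i ∈ s, t i * t i)
        ≤ (x m * x m) * (∑ i ∈ s, t i * t i) :=
      mul_le_mul_of_nonneg_right hxle hbnn
    have h2 : (x m * x m) * (∑ i ∈ s, t i * t i) < (x m * x m) * (t m * t m) :=
      mul_lt_mul_of_pos_left htlt hxm2
    have h3 : (x m * t m) * (x m * t m) = (x m * x m) * (t m * t m) := by ring
    rw [hoe] at hcs
    nlinarith
  have hsum0 : ∑ i ∈ s, x i * x i = 0 := by
    have : (0:ℝ) ≤ ∑ i ∈ s, x i * x i :=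
      Finset.sum_nonneg fun i _ => mul_self_nonneg _
    nlinarith
  funext i
  by_cases hi : i = m
  · rw [hi]; exact hxm
  · have hmem : i ∈ s := Finset.mem_erase.mpr ⟨hi, Finset.mem_univ i⟩
    have := (Finset.sum_eq_zero_iff_of_nonneg (fun i _ => mul_self_nonneg (x i))).mp hsum0 i hmem
    exact mul_self_eq_zero.mp this

lemma perp_unique {n : ℕ} {S : Submodule ℝ (Fin (n+2) → ℝ)}
    (hS : ∀ x ∈ S, (∀ y ∈ S, mB n x y = 0) → x = 0)
    {x a b : Fin (n+2) → ℝ} (ha : a ∈ mperp n S) (ha' : x - a ∈ S)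
    (hb : b ∈ mperp n S) (hb' : x - b ∈ S) : a = b := by
  have hd : a - b ∈ mperp n S := sub_mem ha hb
  have hd2 : a - b ∈ S := by
    have h := sub_mem hb' ha'
    have he : (x - b) - (x - a) = a - b := by ring
    rwa [he] at h
  exact sub_eq_zero.mp (hS _ hd2 (mem_mperp.mp hd))

lemma mperp_inf_le (n : ℕ) (U W : Submodule ℝ (Fin (n+2) → ℝ))
    (x : Fin (n+2) → ℝ) (hx : ∀ s ∈ U ⊓ W, mB n x s = 0) :
    ∃ a ∈ mperp n U, ∃ b ∈ mperp n W, x = a + b := by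
  let φ : (Fin (n+2) → ℝ) →ₗ[ℝ] Module.Dual ℝ (Fin (n+2) → ℝ) := mB n
  have hinj : Function.Injective φ := by
    rw [injective_iff_map_eq_zero]
    intro z hz
    exact mB_zero n z fun y => by
      have : φ z y = 0 := by rw [hz]; rfl
      exact this
  have hsurj : Function.Surjective φ := by
    rw [← LinearMap.range_eq_top]
    apply Submodule.eq_top_of_finrank_eq
    rw [LinearMap.finrank_range_of_inj hinj, Subspace.dual_finrank_eq]
  have hmem : φ x ∈ (U ⊓ W).dualAnnihilator := by
    rw [Submodule.mem_dualAnnihilator]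
    exact hx
  rw [Subspace.dualAnnihilator_inf_eq, Submodule.mem_sup] at hmem
  obtain ⟨f, hf, g, hg, hfg⟩ := hmem
  obtain ⟨a, rfl⟩ := hsurj f
  obtain ⟨b, rfl⟩ := hsurj g
  refine ⟨a, ?_, b, ?_, ?_⟩
  · exact fun s hs => (Submodule.mem_dualAnnihilator _).mp hf s hs
  · exact fun s hs => (Submodule.mem_dualAnnihilator _).mp hg s hs
  · apply hinj; rw [map_add]; exact hfg.symm

/-- `1` is an eigenvalue of `A` and all eigenvalues of `A` are `≤ 1` iff the
Minkowski form restricted to `U ∩ W` is degenerate. -/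
theorem eigenvalue_one_iff_degenerate_inter
    (n : ℕ) (hn : 0 < n) (W U : Submodule ℝ (Fin (n+2) → ℝ))
    (hW : IsPseudoEuclidean n W) (hU : IsPseudoEuclidean n U)
    (hsum : W ⊔ U = ⊤)
    (p p' : (Fin (n+2) → ℝ) →ₗ[ℝ] (Fin (n+2) → ℝ))
    (hp : ∀ x, p x ∈ mperp n U ∧ x - p x ∈ U)
    (hp' : ∀ x, p' x ∈ mperp n W ∧ x - p' x ∈ W)
    (hWtop : W ≠ ⊤) :
    ((∃ v ∈ mperp n W, v ≠ 0 ∧ p' (p v) = v) ∧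
      (∀ α : ℝ, (∃ v ∈ mperp n W, v ≠ 0 ∧ p' (p v) = α • v) → α ≤ 1)) ↔
    (∃ x ∈ U ⊓ W, x ≠ 0 ∧ ∀ y ∈ U ⊓ W, mB n x y = 0) := by
  obtain ⟨hU1, hU2⟩ := hU
  obtain ⟨hW1, t, htW, htt⟩ := hW
  constructor
  · rintro ⟨⟨v, hvW, hv0, hAv⟩, -⟩
    have hxU : v - p v ∈ U := (hp v).2
    have hxW : v - p v ∈ W := by
      have h1 := (hp' (p v)).2
      rw [hAv] at h1
      have he : -(p v - v) = v - p v := by ring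
      rw [← he]; exact neg_mem h1
    refine ⟨v - p v, Submodule.mem_inf.mpr ⟨hxU, hxW⟩, ?_, ?_⟩
    · intro h0
      have hpv : v = p v := by
        have := sub_eq_zero.mp h0; exact this
      apply hv0
      apply mB_zero n v
      intro y
      have hy : y ∈ W ⊔ U := hsum ▸ Submodule.mem_top
      obtain ⟨w, hw, u, hu, rfl⟩ := Submodule.mem_sup.mp hy
      have h1 : mB n v w = 0 := mem_mperp.mp hvW w hw
      have h2 : mB n v u = 0 := by
        rw [hpv]; exact mem_mperp.mp (hp v).1 u hu
      rw [map_add, h1, h2, add_zero]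
    · intro y hy
      obtain ⟨hyU, hyW⟩ := Submodule.mem_inf.mp hy
      have h1 : mB n v y = 0 := mem_mperp.mp hvW y hyW
      have h2 : mB n (p v) y = 0 := mem_mperp.mp (hp v).1 y hyU
      rw [map_sub, LinearMap.sub_apply, h1, h2, sub_zero]
  · rintro ⟨x, hxUW, hx0, hxperp⟩
    obtain ⟨hxU, hxW⟩ := Submodule.mem_inf.mp hxUW
    have hxx : mB n x x = 0 := hxperp x hxUW
    obtain ⟨a, haU, b, hbW, hab⟩ := mperp_inf_le n U W x hxperp
    constructor
    · refine ⟨b, hbW, ?_, ?_⟩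
      · rintro rfl
        apply hx0
        apply hU1 x hxU
        intro y hy
        have hxa : x = a := by rw [hab, add_zero]
        rw [hxa]
        exact mem_mperp.mp haU y hy
      · have hpb : p b = b - x := by
          refine perp_unique hU1 (hp b).1 (hp b).2 ?_ ?_
          · have he : b - x = -a := by rw [hab]; ring
            rw [he]; exact neg_mem haU
          · have he : b - (b - x) = x := by ring
            rw [he]; exact hxU
        rw [hpb]
        refine perp_unique hW1 (hp' (b - x)).1 (hp' (b - x)).2 hbW ?_
        have he : (b - x) - b = -x := by ring
        rw [he]; exact neg_mem hxW
    · rintro α ⟨v, hvW, hv0, hAv⟩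
      by_contra hα
      push_neg at hα
      set u := v - p v with hu
      have huU : u ∈ U := (hp v).2
      have hBpvu : mB n (p v) u = 0 := mem_mperp.mp (hp v).1 u huU
      have hv : v = p v + u := by rw [hu]; ring
      have hsplit : mB n v v = mB n (p v) (p v) + mB n u u := by
        have e : mB n v v = mB n (p v + u) (p v + u) := by rw [← hv]
        rw [e]
        simp only [map_add, LinearMap.add_apply]
        rw [mB_comm n u (p v), hBpvu]
        ring
      have hA : mB n (p' (p v)) v = mB n (p v) (p v) := by
        have h1 : mB n v (p v - p' (p v)) = 0 :=
          mem_mperp.mp hvW _ (hp' (p v)).2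
        rw [map_sub] at h1
        have h2 : mB n (p v) v = mB n (p v) (p v) := by
          have e : mB n (p v) v = mB n (p v) (p v + u) := by rw [← hv]
          rw [e, map_add, hBpvu, add_zero]
        calc mB n (p' (p v)) v = mB n v (p' (p v)) := mB_comm _ _ _
          _ = mB n v (p v) := by linarith
          _ = mB n (p v) v := mB_comm _ _ _
          _ = mB n (p v) (p v) := h2
      have hαv : mB n (p' (p v)) v = α * mB n v v := by
        rw [hAv, map_smul, LinearMap.smul_apply, smul_eq_mul]
      have hvpos : 0 < mB n v v := by
        rcases lt_or_ge 0 (mB n v v) with h | h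
        · exact h
        · exact absurd (timelike_perp n t v htt (mem_mperp.mp hvW t htW) h) hv0
      have huu : mB n u u < 0 := by nlinarith
      have hux : mB n u x = 0 := by
        have h1 : mB n v x = 0 := mem_mperp.mp hvW x hxW
        have h2 : mB n (p v) x = 0 := mem_mperp.mp (hp v).1 x hxU
        rw [hu, map_sub, LinearMap.sub_apply, h1, h2, sub_zero]
      exact hx0 (timelike_perp n u x huu (by rw [mB_comm]; exact hux) (le_of_eq hxx))
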